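/- arXiv:1605.06911 — 3 statements merged into one kernel-verified Lean document; each statement's English description precedes it below -/
import Mathlib

section
/- Let {h_n : n ≥ 1} be a sequence of continuous monotone (non-decreasing) functions on [0,T] converging pointwise on [0,T] to a continuous function h_0, and let f be continuous on [0,T]. Then sup_{t∈[0,T]} |∫₀ᵗ f(s) dh_n(s) − ∫₀ᵗ f(s) dh_0(s)| → 0 as n → ∞. -/
open MeasureTheory Set Filter

private lemma partition_locate {T : ℝ} (hT : 0 < T) (k : ℕ) (hk : 0 < k) {s : ℝ}
    (hs : s ∈ Icc (0:ℝ) T) :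
    ∃ i : ℕ, i + 1 ≤ k ∧ (i : ℝ) * (T / k) ≤ s ∧ s ≤ ((i : ℝ) + 1) * (T / k) := by
  have hk' : (0:ℝ) < k := by exact_mod_cast hk
  set w := T / k with hw
  have hw0 : 0 < w := div_pos hT hk'
  set i0 := ⌊s / w⌋₊ with hi0
  refine ⟨min i0 (k - 1), by omega, ?_, ?_⟩
  · have h1 : ((min i0 (k-1) : ℕ) : ℝ) ≤ (i0 : ℝ) := by
      exact_mod_cast min_le_left i0 (k-1)
    have h2 : (i0 : ℝ) ≤ s / w := Nat.floor_le (div_nonneg hs.1 hw0.le)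
    have := mul_le_mul_of_nonneg_right (h1.trans h2) hw0.le
    rwa [div_mul_cancel₀ _ hw0.ne'] at this
  · rcases le_or_gt i0 (k - 1) with hc | hc
    · rw [min_eq_left hc]
      have h2 : s / w < (i0 : ℝ) + 1 := Nat.lt_floor_add_one _
      have := mul_lt_mul_of_pos_right h2 hw0
      rw [div_mul_cancel₀ _ hw0.ne'] at this
      exact this.le
    · rw [min_eq_right hc.le]
      have : ((k - 1 : ℕ) : ℝ) + 1 = (k : ℝ) := by
        have : (k - 1 : ℕ) + 1 = k := by omega
        exact_mod_cast congrArg (Nat.cast (R := ℝ)) this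
      rw [this, hw, mul_div_cancel₀ _ hk'.ne']
      exact hs.2

private lemma riemann_est (g : StieltjesFunction ℝ) (f : ℝ → ℝ) (y c : ℕ → ℝ) (ε : ℝ)
    (hy : Monotone y) :
    ∀ k : ℕ, IntegrableOn f (Ioc (y 0) (y k)) g.measure →
    (∀ i < k, ∀ s ∈ Ioc (y i) (y (i+1)), |f s - c i| ≤ ε) →
    |(∫ s in Ioc (y 0) (y k), f s ∂g.measure) -
      ∑ i ∈ Finset.range k, c i * (g (y (i+1)) - g (y i))| ≤ ε * (g (y k) - g (y 0)) := by
  intro k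
  induction k with
  | zero => intro _ _; simp
  | succ k ih =>
    intro hint hbound
    have hsub : Ioc (y 0) (y k) ⊆ Ioc (y 0) (y (k+1)) :=
      Ioc_subset_Ioc_right (hy k.le_succ)
    have hintk : IntegrableOn f (Ioc (y 0) (y k)) g.measure := hint.mono_set hsub
    have hintp : IntegrableOn f (Ioc (y k) (y (k+1))) g.measure :=
      hint.mono_set (Ioc_subset_Ioc_left (hy (Nat.zero_le k)))
    have hΔ : (g.measure (Ioc (y k) (y (k+1)))).toReal = g (y (k+1)) - g (y k) := by
      rw [StieltjesFunction.measure_Ioc, ENNReal.toReal_ofReal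
        (sub_nonneg.2 (g.mono (hy k.le_succ)))]
    have hμfin : g.measure (Ioc (y k) (y (k+1))) < ⊤ := by
      rw [StieltjesFunction.measure_Ioc]; exact ENNReal.ofReal_lt_top
    have hsplit : (∫ s in Ioc (y 0) (y (k+1)), f s ∂g.measure) =
        (∫ s in Ioc (y 0) (y k), f s ∂g.measure) +
        ∫ s in Ioc (y k) (y (k+1)), f s ∂g.measure := by
      rw [← setIntegral_union (Set.Ioc_disjoint_Ioc_of_le le_rfl) measurableSet_Ioc hintk hintp,
        Set.Ioc_union_Ioc_eq_Ioc (hy (Nat.zero_le k)) (hy k.le_succ)]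
    have hpiece : |(∫ s in Ioc (y k) (y (k+1)), f s ∂g.measure) -
        c k * (g (y (k+1)) - g (y k))| ≤ ε * (g (y (k+1)) - g (y k)) := by
      have h1 : (∫ s in Ioc (y k) (y (k+1)), f s ∂g.measure) -
          c k * (g (y (k+1)) - g (y k)) =
          ∫ s in Ioc (y k) (y (k+1)), (f s - c k) ∂g.measure := by
        rw [integral_sub hintp (integrableOn_const hμfin.ne),
          setIntegral_const, measureReal_def, hΔ, smul_eq_mul, mul_comm]
      rw [h1]
      have := norm_setIntegral_le_of_norm_le_const (μ := g.measure)
        (s := Ioc (y k) (y (k+1))) (f := fun s => f s - c k) hμfin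
        (fun x hx => by simpa using hbound k k.lt_succ_self x hx)
      rw [measureReal_def, hΔ] at this
      simpa using this
    have hih := ih hintk (fun i hi => hbound i (hi.trans k.lt_succ_self))
    rw [hsplit, Finset.sum_range_succ]
    have h2 : ε * (g (y (k+1)) - g (y 0)) =
        ε * (g (y k) - g (y 0)) + ε * (g (y (k+1)) - g (y k)) := by ring
    rw [h2]
    calc |(∫ s in Ioc (y 0) (y k), f s ∂g.measure) +
          (∫ s in Ioc (y k) (y (k+1)), f s ∂g.measure) -
          (∑ i ∈ Finset.range k, c i * (g (y (i+1)) - g (y i)) +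
            c k * (g (y (k+1)) - g (y k)))|
        ≤ |(∫ s in Ioc (y 0) (y k), f s ∂g.measure) -
            ∑ i ∈ Finset.range k, c i * (g (y (i+1)) - g (y i))| +
          |(∫ s in Ioc (y k) (y (k+1)), f s ∂g.measure) -
            c k * (g (y (k+1)) - g (y k))| := by
          have e : ∀ a b cc d : ℝ, a + b - (cc + d) = (a - cc) + (b - d) := by intros; ring
          rw [e]; exact abs_add_le _ _
      _ ≤ _ := add_le_add hih hpiece

private lemma unif_conv {T : ℝ} (hT : 0 < T) (h : ℕ → StieltjesFunction ℝ)
    (h0 : StieltjesFunction ℝ) (h0cont : Continuous h0)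
    (hconv : ∀ t ∈ Icc (0:ℝ) T, Tendsto (fun n => h n t) atTop (nhds (h0 t)))
    {δ : ℝ} (hδ : 0 < δ) :
    ∀ᶠ n in atTop, ∀ s ∈ Icc (0:ℝ) T, |h n s - h0 s| ≤ δ := by
  obtain ⟨δ0, hδ0, hu⟩ := Metric.uniformContinuousOn_iff_le.1
    (isCompact_Icc.uniformContinuousOn_of_continuous (h0cont.continuousOn))
    (δ/2) (by linarith)
  set k : ℕ := max 1 ⌈T / δ0⌉₊ with hkdef
  have hk : 0 < k := lt_of_lt_of_le one_pos (le_max_left _ _)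
  have hk' : (0:ℝ) < k := by exact_mod_cast hk
  set w := T / k with hw
  have hw0 : 0 < w := div_pos hT hk'
  have hwδ : w ≤ δ0 := by
    rw [hw, div_le_iff₀ hk']
    have h1 : T / δ0 ≤ (k : ℝ) := le_trans (Nat.le_ceil _)
      (by exact_mod_cast le_max_right 1 ⌈T / δ0⌉₊)
    calc T = (T / δ0) * δ0 := by field_simp
      _ ≤ (k : ℝ) * δ0 := by nlinarith
      _ = δ0 * k := by ring
  set x : ℕ → ℝ := fun i => (i : ℝ) * w with hx
  have hxmem : ∀ i ≤ k, x i ∈ Icc (0:ℝ) T := by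
    intro i hi
    constructor
    · positivity
    · have : (i : ℝ) ≤ k := by exact_mod_cast hi
      calc (i:ℝ) * w ≤ (k:ℝ) * w := by nlinarith
        _ = T := by rw [hw]; field_simp
  have hev : ∀ᶠ n in atTop, ∀ i ∈ Finset.range (k+1), |h n (x i) - h0 (x i)| ≤ δ/2 := by
    rw [Filter.eventually_all_finset]
    intro i hi
    have hmem := hxmem i (by simpa using Nat.lt_succ_iff.1 (Finset.mem_range.1 hi))
    have := (hconv (x i) hmem).eventually (Metric.closedBall_mem_nhds (h0 (x i))
      (show (0:ℝ) < δ/2 by linarith))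
    filter_upwards [this] with n hn
    simpa [Metric.mem_closedBall, Real.dist_eq] using hn
  filter_upwards [hev] with n hn s hs
  obtain ⟨i, hik, h1, h2⟩ := partition_locate hT k hk hs
  have hxi : x i ∈ Icc (0:ℝ) T := hxmem i (by omega)
  have hxi1 : x (i+1) ∈ Icc (0:ℝ) T := hxmem (i+1) hik
  have hbi : |h n (x i) - h0 (x i)| ≤ δ/2 := hn i (Finset.mem_range.2 (by omega))
  have hbi1 : |h n (x (i+1)) - h0 (x (i+1))| ≤ δ/2 := hn (i+1) (Finset.mem_range.2 (by omega))
  have hxi1' : x (i+1) = ((i:ℝ)+1) * w := by simp [hx]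
  have hd1 : |h0 (x (i+1)) - h0 s| ≤ δ/2 := by
    have : dist (h0 (x (i+1))) (h0 s) ≤ δ/2 := hu _ hxi1 _ hs (by
      rw [Real.dist_eq, hxi1']
      rw [abs_le]
      constructor
      · nlinarith [hδ0, hw0, h2]
      · nlinarith [h1, hwδ])
    rwa [Real.dist_eq] at this
  have hd0 : |h0 s - h0 (x i)| ≤ δ/2 := by
    have : dist (h0 s) (h0 (x i)) ≤ δ/2 := hu _ hs _ hxi (by
      rw [Real.dist_eq, abs_le]
      constructor
      · simp only [hx]; nlinarith [h1, hwδ, hδ0, hw0]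
      · simp only [hx]; nlinarith [h2, hwδ, hw0])
    rwa [Real.dist_eq] at this
  have m1 : h n s ≤ h n (x (i+1)) := (h n).mono (by rw [hxi1']; exact h2)
  have m2 : h n (x i) ≤ h n s := (h n).mono h1
  rw [abs_le] at hbi hbi1 hd1 hd0 ⊢
  constructor
  · linarith [hbi.1, hd0.1]
  · linarith [hbi1.2, hd1.1]


set_option maxHeartbeats 1000000 in
/-- Convergence of Stieltjes integrals of a continuous function against a sequence of
continuous monotone integrators converging pointwise to a continuous limit,
uniformly in the upper limit of integration. -/
theorem stieltjes_integral_convergence (T : ℝ) (hT : 0 < T) (f : ℝ → ℝ)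
    (hf : ContinuousOn f (Icc 0 T))
    (h : ℕ → StieltjesFunction ℝ) (h0 : StieltjesFunction ℝ)
    (hcont : ∀ n, Continuous (h n)) (h0cont : Continuous h0)
    (hconv : ∀ t ∈ Icc (0:ℝ) T, Tendsto (fun n => h n t) atTop (nhds (h0 t))) :
    Tendsto
      (fun n => sSup ((fun t => |(∫ s in Ioc 0 t, f s ∂(h n).measure) -
        ∫ s in Ioc 0 t, f s ∂h0.measure|) '' Icc (0:ℝ) T)) atTop (nhds 0) := by
  rw [Metric.tendsto_atTop]
  intro ε hε
  obtain ⟨B, hB⟩ := isCompact_Icc.exists_bound_of_continuousOn hf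
  have hB0 : 0 ≤ B := le_trans (norm_nonneg (f 0)) (hB 0 ⟨le_refl 0, hT.le⟩)
  set C : ℝ := h0 T - h0 0 + 1 with hCdef
  have hC1 : 1 ≤ C := by
    have := h0.mono hT.le
    rw [hCdef]; linarith
  have hC0 : 0 < C := by linarith
  set η : ℝ := ε / 2 with hηdef
  have hη0 : 0 < η := by rw [hηdef]; linarith
  set ε1 : ℝ := η / (4 * C) with hε1def
  have hε10 : 0 < ε1 := by rw [hε1def]; positivity
  obtain ⟨δ, hδ0, hfu⟩ := Metric.uniformContinuousOn_iff_le.1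
    (isCompact_Icc.uniformContinuousOn_of_continuous hf) ε1 hε10
  set k : ℕ := max 1 ⌈T / δ⌉₊ with hkdef
  have hk : 0 < k := lt_of_lt_of_le one_pos (le_max_left _ _)
  have hk' : (0:ℝ) < k := by exact_mod_cast hk
  set w : ℝ := T / k with hw
  have hw0 : 0 < w := div_pos hT hk'
  have hwδ : w ≤ δ := by
    rw [hw, div_le_iff₀ hk']
    have h1 : T / δ ≤ (k : ℝ) := le_trans (Nat.le_ceil _)
      (by exact_mod_cast le_max_right 1 ⌈T / δ⌉₊)
    calc T = (T / δ) * δ := by field_simp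
      _ ≤ (k : ℝ) * δ := by nlinarith
      _ = δ * k := by ring
  set x : ℕ → ℝ := fun i => (i : ℝ) * w with hx
  have hkw : (k : ℝ) * w = T := by rw [hw]; field_simp
  have hxmem : ∀ i ≤ k, x i ∈ Icc (0:ℝ) T := by
    intro i hi
    constructor
    · exact mul_nonneg (Nat.cast_nonneg i) hw0.le
    · have : (i : ℝ) ≤ k := by exact_mod_cast hi
      calc (i:ℝ) * w ≤ (k:ℝ) * w := by nlinarith
        _ = T := hkw
  set δ' : ℝ := min 1 (η / (8 * k * (B + 1))) with hδ'def
  have hδ'0 : 0 < δ' := lt_min one_pos (by positivity)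
  have hδ'1 : δ' ≤ 1 := min_le_left _ _
  have hδ'2 : δ' ≤ η / (8 * k * (B + 1)) := min_le_right _ _
  obtain ⟨N, hN⟩ := Filter.eventually_atTop.1 (unif_conv hT h h0 h0cont hconv hδ'0)
  refine ⟨N, fun n hn => ?_⟩
  have hsup : ∀ s ∈ Icc (0:ℝ) T, |h n s - h0 s| ≤ δ' := hN n hn
  have key : ∀ t ∈ Icc (0:ℝ) T,
      |(∫ s in Ioc 0 t, f s ∂(h n).measure) - ∫ s in Ioc 0 t, f s ∂h0.measure| ≤ η := by
    intro t ht
    set y : ℕ → ℝ := fun i => min t (x i) with hy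
    have hymono : Monotone y := fun a b hab =>
      min_le_min le_rfl (mul_le_mul_of_nonneg_right (by exact_mod_cast hab) hw0.le)
    have hy0 : y 0 = 0 := by
      simp only [hy, hx, Nat.cast_zero, zero_mul]
      exact min_eq_right ht.1
    have hyk : y k = t := by
      simp only [hy, hx, hkw]
      exact min_eq_left ht.2
    have hyIcc : ∀ i, y i ∈ Icc (0:ℝ) T :=
      fun i => ⟨le_min ht.1 (mul_nonneg (Nat.cast_nonneg i) hw0.le),
        (min_le_left _ _).trans ht.2⟩
    have hIocsub : Ioc (y 0) (y k) ⊆ Icc (0:ℝ) T := by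
      rw [hy0, hyk]
      exact fun s hs => ⟨hs.1.le, hs.2.trans ht.2⟩
    have hi1 : IntegrableOn f (Ioc (y 0) (y k)) (h n).measure :=
      (hf.integrableOn_Icc).mono_set hIocsub
    have hi0 : IntegrableOn f (Ioc (y 0) (y k)) h0.measure :=
      (hf.integrableOn_Icc).mono_set hIocsub
    have hbound : ∀ i < k, ∀ s ∈ Ioc (y i) (y (i+1)), |f s - f (x i)| ≤ ε1 := by
      intro i hik s hs
      have hxit : x i < t := by
        by_contra hc
        push_neg at hc
        have h1 : y i = t := min_eq_left hc
        have h2 : s ≤ t := (hs.2).trans (min_le_left _ _)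
        rw [h1] at hs
        exact absurd hs.1 (not_lt.2 h2)
      have hyi : y i = x i := min_eq_right hxit.le
      have hs1 : x i < s := by rw [hyi] at hs; exact hs.1
      have hs2 : s ≤ x (i+1) := (hs.2).trans (min_le_right _ _)
      have hxd : x (i+1) - x i = w := by
        simp only [hx]; push_cast; ring
      have hxi1T : x (i+1) ≤ T := (hxmem (i+1) hik).2
      have hxi0 : 0 ≤ x i := (hxmem i (le_of_lt hik)).1
      have hsIcc : s ∈ Icc (0:ℝ) T := ⟨hxi0.trans hs1.le, hs2.trans hxi1T⟩
      have hdist : dist s (x i) ≤ δ := by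
        rw [Real.dist_eq, abs_le]
        constructor
        · linarith
        · linarith
      have := hfu s hsIcc (x i) (hxmem i (le_of_lt hik)) hdist
      rwa [Real.dist_eq] at this
    have R1 := riemann_est (h n) f y (fun i => f (x i)) ε1 hymono k hi1 hbound
    have R0 := riemann_est h0 f y (fun i => f (x i)) ε1 hymono k hi0 hbound
    rw [hy0, hyk] at R1 R0
    have hsum : |∑ i ∈ Finset.range k, f (x i) * (h n (y (i+1)) - h n (y i)) -
        ∑ i ∈ Finset.range k, f (x i) * (h0 (y (i+1)) - h0 (y i))| ≤ η / 4 := by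
      rw [← Finset.sum_sub_distrib]
      refine (Finset.abs_sum_le_sum_abs _ _).trans ?_
      have hterm : ∀ i ∈ Finset.range k,
          |f (x i) * (h n (y (i+1)) - h n (y i)) - f (x i) * (h0 (y (i+1)) - h0 (y i))|
          ≤ B * (2 * δ') := by
        intro i hi
        have e : f (x i) * (h n (y (i+1)) - h n (y i)) - f (x i) * (h0 (y (i+1)) - h0 (y i))
            = f (x i) * ((h n (y (i+1)) - h0 (y (i+1))) - (h n (y i) - h0 (y i))) := by ring
        rw [e, abs_mul]
        have hb1 := hsup (y (i+1)) (hyIcc (i+1))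
        have hb2 := hsup (y i) (hyIcc i)
        have habs : |(h n (y (i+1)) - h0 (y (i+1))) - (h n (y i) - h0 (y i))| ≤ 2 * δ' :=
          (abs_sub _ _).trans (by linarith)
        have hfb : |f (x i)| ≤ B := hB (x i) (hxmem i (Finset.mem_range.1 hi).le)
        exact mul_le_mul hfb habs (abs_nonneg _) hB0
      refine (Finset.sum_le_sum hterm).trans ?_
      rw [Finset.sum_const, Finset.card_range, nsmul_eq_mul]
      have hB1 : (0:ℝ) < B + 1 := by linarith
      calc (k : ℝ) * (B * (2 * δ')) = (2 * k * B) * δ' := by ring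
        _ ≤ (2 * k * (B + 1)) * δ' := by
            refine mul_le_mul_of_nonneg_right ?_ hδ'0.le
            nlinarith [hk']
        _ ≤ (2 * k * (B + 1)) * (η / (8 * k * (B + 1))) := by
            refine mul_le_mul_of_nonneg_left hδ'2 (by positivity)
        _ = η / 4 := by field_simp; ring
    -- endpoint bounds
    have hbT := hsup T ⟨hT.le, le_refl T⟩
    have hb0' := hsup 0 ⟨le_refl 0, hT.le⟩
    rw [abs_le] at hbT hb0'
    have hmn : h n t ≤ h n T := (h n).mono ht.2
    have hm0 : h n 0 ≤ h n t := (h n).mono ht.1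
    have hm0' : h0 0 ≤ h0 t := h0.mono ht.1
    have hmt' : h0 t ≤ h0 T := h0.mono ht.2
    have hR1' : ε1 * (h n t - h n 0) ≤ η / 2 := by
      have h2C : h n t - h n 0 ≤ 2 * C := by
        linarith [hbT.1, hbT.2, hb0'.1, hb0'.2, hδ'1, hCdef, hmn, hm0, hC1]
      have hmono' : h n 0 ≤ h n t := hm0
      calc ε1 * (h n t - h n 0) ≤ ε1 * (2 * C) := mul_le_mul_of_nonneg_left h2C hε10.le
        _ = η / 2 := by rw [hε1def]; field_simp [hC0.ne']; ring
    have hR0' : ε1 * (h0 t - h0 0) ≤ η / 4 := by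
      have hC' : h0 t - h0 0 ≤ C := by linarith [hCdef, hmt']
      calc ε1 * (h0 t - h0 0) ≤ ε1 * C := mul_le_mul_of_nonneg_left hC' hε10.le
        _ = η / 4 := by rw [hε1def]; field_simp [hC0.ne']
    have htri : |(∫ s in Ioc 0 t, f s ∂(h n).measure) - ∫ s in Ioc 0 t, f s ∂h0.measure|
        ≤ |(∫ s in Ioc 0 t, f s ∂(h n).measure) -
            ∑ i ∈ Finset.range k, f (x i) * (h n (y (i+1)) - h n (y i))| +
          |∑ i ∈ Finset.range k, f (x i) * (h n (y (i+1)) - h n (y i)) -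
            ∑ i ∈ Finset.range k, f (x i) * (h0 (y (i+1)) - h0 (y i))| +
          |∑ i ∈ Finset.range k, f (x i) * (h0 (y (i+1)) - h0 (y i)) -
            (∫ s in Ioc 0 t, f s ∂h0.measure)| :=
      (abs_sub_le _ _ _).trans (add_le_add_left (abs_sub_le _ _ _) _)
    have hR0'' : |∑ i ∈ Finset.range k, f (x i) * (h0 (y (i+1)) - h0 (y i)) -
        (∫ s in Ioc 0 t, f s ∂h0.measure)| ≤ ε1 * (h0 t - h0 0) := by
      rw [abs_sub_comm]; exact R0
    linarith [R1, hR1', hR0', hR0'', hsum, htri]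
  have hnonneg : ∀ z ∈ ((fun t => |(∫ s in Ioc 0 t, f s ∂(h n).measure) -
      ∫ s in Ioc 0 t, f s ∂h0.measure|) '' Icc (0:ℝ) T), 0 ≤ z := by
    rintro z ⟨t, _, rfl⟩; exact abs_nonneg _
  have hle : sSup ((fun t => |(∫ s in Ioc 0 t, f s ∂(h n).measure) -
      ∫ s in Ioc 0 t, f s ∂h0.measure|) '' Icc (0:ℝ) T) ≤ η := by
    refine Real.sSup_le ?_ hη0.le
    rintro z ⟨t, ht, rfl⟩
    exact key t ht
  have hge : 0 ≤ sSup ((fun t => |(∫ s in Ioc 0 t, f s ∂(h n).measure) -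
      ∫ s in Ioc 0 t, f s ∂h0.measure|) '' Icc (0:ℝ) T) :=
    Real.sSup_nonneg hnonneg
  rw [Real.dist_eq, sub_zero, abs_of_nonneg hge]
  rw [hηdef] at hle
  linarith
end

section
/- Let X, Y be complete separable metric spaces and (Ω, F, P) a probability space. Let ξ_n : Ω → X (n ≥ 0) be measurable maps with ξ_n → ξ_0 in probability P, and h_n : X → Y (n ≥ 0) be measurable maps with h_n → h_0 in measure ν, where ν is a probability measure on X. Assume that for each n ≥ 1 the distribution of ξ_n is absolutely continuous with respect to ν and the family of densities {dP_{ξ_n}/dν : n ≥ 1} is uniformly integrable with respect to ν. Then h_n(ξ_n) → h_0(ξ_0) in probability P. -/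
open MeasureTheory Filter Topology

lemma key_ui_bound {X Ω : Type*} [MeasurableSpace X] [MeasurableSpace Ω]
    (P : Measure Ω) [IsProbabilityMeasure P] (ξ : ℕ → Ω → X) (hξmeas : ∀ n, Measurable (ξ n))
    (ν : Measure X) [IsProbabilityMeasure ν]
    (hac : ∀ n, 1 ≤ n → Measure.map (ξ n) P ≪ ν)
    (hui : UnifIntegrable (fun n x => ((Measure.map (ξ (n + 1)) P).rnDeriv ν x).toReal) 1 ν)
    {ε : ℝ} (hε : 0 < ε) :
    ∃ δ : ℝ, 0 < δ ∧ ∀ (n : ℕ) (s : Set X), MeasurableSet s → ν s ≤ ENNReal.ofReal δ →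
      Measure.map (ξ (n + 1)) P s ≤ ENNReal.ofReal ε := by
  obtain ⟨δ, hδ, hbound⟩ := hui hε
  refine ⟨δ, hδ, fun n s hs hνs => ?_⟩
  haveI : IsProbabilityMeasure (Measure.map (ξ (n + 1)) P) :=
    Measure.isProbabilityMeasure_map (hξmeas _).aemeasurable
  have h1 : Measure.map (ξ (n + 1)) P s
      = ∫⁻ x in s, (Measure.map (ξ (n + 1)) P).rnDeriv ν x ∂ν := by
    conv_lhs => rw [← Measure.withDensity_rnDeriv_eq _ _ (hac (n + 1) (Nat.le_add_left 1 n))]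
    rw [withDensity_apply _ hs]
  have h2 : eLpNorm (s.indicator fun x => ((Measure.map (ξ (n + 1)) P).rnDeriv ν x).toReal) 1 ν
      = ∫⁻ x in s, (Measure.map (ξ (n + 1)) P).rnDeriv ν x ∂ν := by
    rw [eLpNorm_one_eq_lintegral_enorm, ← lintegral_indicator hs]
    refine lintegral_congr_ae ?_
    filter_upwards [Measure.rnDeriv_lt_top (Measure.map (ξ (n + 1)) P) ν] with x hx
    by_cases hxs : x ∈ s
    · rw [Set.indicator_of_mem hxs, Set.indicator_of_mem hxs,
        Real.enorm_eq_ofReal ENNReal.toReal_nonneg, ENNReal.ofReal_toReal hx.ne]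
    · simp [hxs]
  rw [h1, ← h2]
  exact hbound n s hs hνs

/-- Kulik-type proposition: if `ξ n → ξ 0` in probability, `h n → h 0` in measure `ν`,
the distributions of `ξ n` (for `n ≥ 1`) are absolutely continuous w.r.t. `ν` with
uniformly integrable densities, then `h n (ξ n) → h 0 (ξ 0)` in probability. -/
theorem comp_tendsto_in_probability
    {X Y Ω : Type*} [MetricSpace X] [CompleteSpace X] [SecondCountableTopology X]
    [MeasurableSpace X] [BorelSpace X]
    [MetricSpace Y] [CompleteSpace Y] [SecondCountableTopology Y]
    [MeasurableSpace Y] [BorelSpace Y]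
    [MeasurableSpace Ω] (P : Measure Ω) [IsProbabilityMeasure P]
    (ξ : ℕ → Ω → X) (h : ℕ → X → Y)
    (hξmeas : ∀ n, Measurable (ξ n)) (hhmeas : ∀ n, Measurable (h n))
    (ν : Measure X) [IsProbabilityMeasure ν]
    (hξ : TendstoInMeasure P (fun n => ξ n) atTop (ξ 0))
    (hh : TendstoInMeasure ν (fun n => h n) atTop (h 0))
    (hac : ∀ n, 1 ≤ n → Measure.map (ξ n) P ≪ ν)
    (hui : UnifIntegrable
      (fun n x => ((Measure.map (ξ (n + 1)) P).rnDeriv ν x).toReal) 1 ν) :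
    TendstoInMeasure P (fun n ω => h n (ξ n ω)) atTop (fun ω => h 0 (ξ 0 ω)) := by
  classical
  have hΩne : Nonempty Ω := by
    by_contra hne
    rw [not_nonempty_iff] at hne
    have h1 : P Set.univ = 1 := measure_univ
    rw [Set.univ_eq_empty_iff.mpr hne, measure_empty] at h1
    exact zero_ne_one h1
  obtain ⟨ω₀⟩ := hΩne
  haveI : Nonempty Y := ⟨h 0 (ξ 0 ω₀)⟩
  rw [tendstoInMeasure_iff_dist] at hξ hh ⊢
  intro ε hε
  rw [ENNReal.tendsto_nhds_zero]
  intro θ hθ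
  obtain ⟨c, hc, hcθ⟩ : ∃ c : ℝ, 0 < c ∧ ENNReal.ofReal (5 * c) ≤ θ := by
    rcases eq_or_ne θ ⊤ with hT | hT
    · exact ⟨1, one_pos, by simp [hT]⟩
    · have hpos : 0 < θ.toReal := ENNReal.toReal_pos hθ.ne' hT
      refine ⟨θ.toReal / 5, by positivity, ?_⟩
      rw [show 5 * (θ.toReal / 5) = θ.toReal by ring, ENNReal.ofReal_toReal hT]
  obtain ⟨δ, hδ, hkey⟩ := key_ui_bound P ξ hξmeas ν hac hui hc
  set d := min δ c with hd
  have hd0 : 0 < d := lt_min hδ hc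
  -- distribution of ξ 0 and the reference measure
  set μ₁ : Measure X := Measure.map (ξ 0) P with hμ₁
  haveI : IsProbabilityMeasure μ₁ := Measure.isProbabilityMeasure_map (hξmeas 0).aemeasurable
  set μ₀ : Measure X := ν + μ₁ with hμ₀
  have hν_le : ∀ s : Set X, ν s ≤ μ₀ s := fun s => by
    rw [hμ₀, Measure.add_apply]; exact le_self_add
  have hμ₁_le : ∀ s : Set X, μ₁ s ≤ μ₀ s := fun s => by
    rw [hμ₀, Measure.add_apply]; exact le_add_self
  -- dense sequence and the partition
  set y : ℕ → Y := TopologicalSpace.denseSeq Y with hy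
  have hdense : DenseRange y := TopologicalSpace.denseRange_denseSeq Y
  set C : ℕ → Set X := fun k => h 0 ⁻¹' Metric.ball (y k) (ε / 4) with hC
  have hCmeas : ∀ k, MeasurableSet (C k) := fun k => (hhmeas 0) measurableSet_ball
  have hCuniv : ∀ x : X, ∃ k, x ∈ C k := by
    intro x
    obtain ⟨k, hk⟩ := Metric.denseRange_iff.mp hdense (h 0 x) (ε / 4) (by positivity)
    exact ⟨k, by simpa [hC] using hk⟩
  set A : ℕ → Set X := fun k => C k \ ⋃ j, ⋃ _ : j < k, C j with hA
  have hAmeas : ∀ k, MeasurableSet (A k) := fun k =>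
    (hCmeas k).diff (MeasurableSet.iUnion fun j => MeasurableSet.iUnion fun _ => hCmeas j)
  have hAsub : ∀ k, A k ⊆ C k := fun k => Set.diff_subset
  have hAdisj : ∀ k l, k ≠ l → A k ∩ A l ⊆ (∅ : Set X) := by
    intro k l hkl x hx
    obtain ⟨hxk, hxl⟩ := hx
    rcases lt_or_gt_of_ne hkl with hlt | hlt
    · exact hxl.2 (Set.mem_iUnion.mpr ⟨k, Set.mem_iUnion.mpr ⟨hlt, hxk.1⟩⟩)
    · exact hxk.2 (Set.mem_iUnion.mpr ⟨l, Set.mem_iUnion.mpr ⟨hlt, hxl.1⟩⟩)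
  have hAcover : ∀ (N : ℕ) (x : X), x ∈ (⋃ j, ⋃ _ : j < N, C j) →
      ∃ k, k < N ∧ x ∈ A k := by
    intro N x hx
    obtain ⟨k, hkN, hkC⟩ : ∃ k, k < N ∧ x ∈ C k := by
      simpa using hx
    have hex : ∃ k, x ∈ C k := ⟨k, hkC⟩
    refine ⟨Nat.find hex, lt_of_le_of_lt (Nat.find_min' hex hkC) hkN, ?_, ?_⟩
    · exact Nat.find_spec hex
    · intro hmem
      obtain ⟨j, hj⟩ := Set.mem_iUnion.mp hmem
      obtain ⟨hjlt, hjC⟩ := Set.mem_iUnion.mp hj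
      exact Nat.find_min hex hjlt hjC
  -- choose N
  have hVtendsto : Tendsto (fun N => μ₀ ((⋃ j, ⋃ _ : j < N, C j)ᶜ)) atTop (𝓝 0) := by
    have hiInter : ⋂ N, ((⋃ j, ⋃ _ : j < N, C j)ᶜ) = (∅ : Set X) := by
      rw [Set.eq_empty_iff_forall_notMem]
      intro x hx
      obtain ⟨k, hk⟩ := hCuniv x
      have := Set.mem_iInter.mp hx (k + 1)
      exact this (Set.mem_iUnion.mpr ⟨k, Set.mem_iUnion.mpr ⟨Nat.lt_succ_self k, hk⟩⟩)
    have := tendsto_measure_iInter_atTop (μ := μ₀)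
      (s := fun N => (⋃ j, ⋃ _ : j < N, C j)ᶜ)
      (fun N => ((MeasurableSet.iUnion fun j => MeasurableSet.iUnion fun _ =>
        hCmeas j).compl).nullMeasurableSet)
      (fun N M hNM => Set.compl_subset_compl.mpr (Set.iUnion_mono fun j =>
        Set.iUnion_subset fun hj =>
          Set.subset_iUnion (fun _ : j < M => C j) (lt_of_lt_of_le hj hNM)))
      ⟨0, measure_ne_top _ _⟩
    rw [hiInter, measure_empty] at this
    exact this
  obtain ⟨N, hN⟩ := (ENNReal.tendsto_nhds_zero.mp hVtendsto (ENNReal.ofReal (d / 2))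
    (ENNReal.ofReal_pos.mpr (by positivity))).exists
  -- closed subsets of the partition pieces
  have hF'ex : ∀ k, ∃ F', F' ⊆ A k ∧ IsClosed F' ∧
      μ₀ (A k \ F') ≤ ENNReal.ofReal (d / (2 * (N + 1))) := by
    intro k
    obtain ⟨F', h1, h2, h3⟩ := (hAmeas k).exists_isClosed_diff_lt (measure_ne_top μ₀ _)
      (ε := ENNReal.ofReal (d / (2 * (N + 1))))
      (ENNReal.ofReal_pos.mpr (by positivity)).ne'
    exact ⟨F', h1, h2, h3.le⟩
  choose F' hF'A hF'closed hF'μ using hF'ex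
  set F : Set X := ⋃ j, ⋃ _ : j < N, F' j with hF
  have hFmeas : MeasurableSet F :=
    MeasurableSet.iUnion fun j => MeasurableSet.iUnion fun _ => (hF'closed j).measurableSet
  -- μ₀ of Fᶜ is small
  have hμ₀Fc : μ₀ Fᶜ ≤ ENNReal.ofReal d := by
    have hsub : Fᶜ ⊆ ((⋃ j, ⋃ _ : j < N, C j)ᶜ) ∪ (⋃ j, ⋃ _ : j < N, (A j \ F' j)) := by
      intro x hx
      by_cases hxV : x ∈ (⋃ j, ⋃ _ : j < N, C j)
      · right
        obtain ⟨j, hjN, hjA⟩ := hAcover N x hxV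
        refine Set.mem_iUnion.mpr ⟨j, Set.mem_iUnion.mpr ⟨hjN, hjA, fun hFj => ?_⟩⟩
        exact hx (Set.mem_iUnion.mpr ⟨j, Set.mem_iUnion.mpr ⟨hjN, hFj⟩⟩)
      · left; exact hxV
    have hbU : (⋃ j, ⋃ _ : j < N, (A j \ F' j)) = ⋃ j ∈ Finset.range N, (A j \ F' j) := by
      simp [Finset.mem_range]
    calc μ₀ Fᶜ ≤ μ₀ ((⋃ j, ⋃ _ : j < N, C j)ᶜ) + μ₀ (⋃ j, ⋃ _ : j < N, (A j \ F' j)) :=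
          (measure_mono hsub).trans (measure_union_le _ _)
      _ ≤ ENNReal.ofReal (d / 2) + ∑ j ∈ Finset.range N, μ₀ (A j \ F' j) := by
          rw [hbU]; exact add_le_add hN (measure_biUnion_finset_le _ _)
      _ ≤ ENNReal.ofReal (d / 2) + ∑ j ∈ Finset.range N, ENNReal.ofReal (d / (2 * (N + 1))) :=
          add_le_add le_rfl (Finset.sum_le_sum fun j _ => hF'μ j)
      _ ≤ ENNReal.ofReal (d / 2) + ENNReal.ofReal (d / 2) := by
          rw [Finset.sum_const, Finset.card_range, nsmul_eq_mul,
            ← ENNReal.ofReal_natCast, ← ENNReal.ofReal_mul (Nat.cast_nonneg N)]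
          refine add_le_add le_rfl (ENNReal.ofReal_le_ofReal ?_)
          have hkey2 : (N : ℝ) / ((N : ℝ) + 1) ≤ 1 := by
            rw [div_le_one (by positivity)]; linarith [Nat.cast_nonneg (α := ℝ) N]
          have hne : ((N : ℝ) + 1) ≠ 0 := by positivity
          calc (N : ℝ) * (d / (2 * ((N : ℝ) + 1))) = ((N : ℝ) / ((N : ℝ) + 1)) * (d / 2) := by
                field_simp
            _ ≤ 1 * (d / 2) := mul_le_mul_of_nonneg_right hkey2 (by positivity)
            _ = d / 2 := one_mul _
      _ = ENNReal.ofReal d := by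
          rw [← ENNReal.ofReal_add (by positivity) (by positivity)]
          norm_num
  have hνFc : ν Fᶜ ≤ ENNReal.ofReal δ :=
    ((hν_le _).trans hμ₀Fc).trans (ENNReal.ofReal_le_ofReal (min_le_left _ _))
  have hμ₁Fc : μ₁ Fᶜ ≤ ENNReal.ofReal c :=
    ((hμ₁_le _).trans hμ₀Fc).trans (ENNReal.ofReal_le_ofReal (min_le_right _ _))
  -- choice of the separation radius r
  set e : ℝ := c / (((N : ℝ) + 1) * ((N : ℝ) + 1)) with he
  have he0 : 0 < e := by positivity
  have hpair : ∀ k l : ℕ, k ≠ l →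
      Tendsto (fun m : ℕ => μ₁ (F' k ∩ Metric.thickening (1 / ((m : ℝ) + 1)) (F' l)))
        atTop (𝓝 0) := by
    intro k l hkl
    have hiI : ⋂ m : ℕ, (F' k ∩ Metric.thickening (1 / ((m : ℝ) + 1)) (F' l)) = ∅ := by
      rw [Set.eq_empty_iff_forall_notMem]
      intro x hx
      have hx' : x ∈ F' k ∩ ⋂ m : ℕ, Metric.thickening (1 / ((m : ℝ) + 1)) (F' l) := by
        rw [Set.inter_iInter]; exact hx
      have hclosure : (⋂ m : ℕ, Metric.thickening (1 / ((m : ℝ) + 1)) (F' l))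
          = closure (F' l) := by
        rw [Metric.closure_eq_iInter_thickening' (F' l)
          (Set.range (fun m : ℕ => 1 / ((m : ℝ) + 1)))
          (by rintro _ ⟨m, rfl⟩; exact Set.mem_Ioi.mpr (by positivity))
          (fun η hη => by
            obtain ⟨m, hm⟩ := exists_nat_one_div_lt hη
            exact ⟨1 / ((m : ℝ) + 1), ⟨m, rfl⟩, one_div_pos.mpr (by positivity), hm.le⟩),
          Set.biInter_range]
      rw [hclosure, (hF'closed l).closure_eq] at hx'
      exact hAdisj k l hkl ⟨hF'A k hx'.1, hF'A l hx'.2⟩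
    have := tendsto_measure_iInter_atTop (μ := μ₁)
      (s := fun m : ℕ => F' k ∩ Metric.thickening (1 / ((m : ℝ) + 1)) (F' l))
      (fun m => ((hF'closed k).measurableSet.inter
        Metric.isOpen_thickening.measurableSet).nullMeasurableSet)
      (fun m m' hmm' => Set.inter_subset_inter_right _ (Metric.thickening_mono
        (by
          apply one_div_le_one_div_of_le (by positivity)
          exact_mod_cast Nat.add_le_add_right hmm' 1) _))
      ⟨0, measure_ne_top _ _⟩
    rw [hiI, measure_empty] at this
    exact this
  have hevpair : ∀ᶠ m : ℕ in atTop, ∀ k ∈ Finset.range N, ∀ l ∈ Finset.range N, k ≠ l →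
      μ₁ (F' k ∩ Metric.thickening (1 / ((m : ℝ) + 1)) (F' l)) ≤ ENNReal.ofReal e := by
    rw [eventually_all_finset]
    intro k _
    rw [eventually_all_finset]
    intro l _
    rcases eq_or_ne k l with rfl | hkl
    · exact Eventually.of_forall fun m hkl => absurd rfl hkl
    · filter_upwards [ENNReal.tendsto_nhds_zero.mp (hpair k l hkl) (ENNReal.ofReal e)
        (ENNReal.ofReal_pos.mpr he0)] with m hm _
      exact hm
  obtain ⟨M, hM⟩ := hevpair.exists
  set r : ℝ := 1 / ((M : ℝ) + 1) with hr
  have hr0 : 0 < r := one_div_pos.mpr (by positivity)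
  set B : Set X := ⋃ k, ⋃ _ : k < N, ⋃ l, ⋃ _ : l < N, ⋃ _ : k ≠ l,
    (F' k ∩ Metric.thickening r (F' l)) with hB
  have hBmeas : MeasurableSet B := by
    refine MeasurableSet.iUnion fun k => MeasurableSet.iUnion fun _ =>
      MeasurableSet.iUnion fun l => MeasurableSet.iUnion fun _ =>
      MeasurableSet.iUnion fun _ => ?_
    exact (hF'closed k).measurableSet.inter Metric.isOpen_thickening.measurableSet
  have hμ₁B : μ₁ B ≤ ENNReal.ofReal c := by
    have hBeq : B = ⋃ k ∈ Finset.range N, ⋃ l ∈ Finset.range N, ⋃ _ : k ≠ l,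
        (F' k ∩ Metric.thickening r (F' l)) := by
      simp [hB, Finset.mem_range]
    calc μ₁ B ≤ ∑ k ∈ Finset.range N, μ₁ (⋃ l ∈ Finset.range N, ⋃ _ : k ≠ l,
          (F' k ∩ Metric.thickening r (F' l))) := by
          rw [hBeq]; exact measure_biUnion_finset_le _ _
      _ ≤ ∑ k ∈ Finset.range N, ∑ l ∈ Finset.range N, μ₁ (⋃ _ : k ≠ l,
          (F' k ∩ Metric.thickening r (F' l))) :=
          Finset.sum_le_sum fun k _ => measure_biUnion_finset_le _ _
      _ ≤ ∑ k ∈ Finset.range N, ∑ l ∈ Finset.range N, ENNReal.ofReal e := by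
          refine Finset.sum_le_sum fun k hk => Finset.sum_le_sum fun l hl => ?_
          rcases eq_or_ne k l with rfl | hkl
          · refine le_trans (measure_mono (show (⋃ _ : k ≠ k,
                (F' k ∩ Metric.thickening r (F' k))) ⊆ (∅ : Set X) from
                Set.iUnion_subset fun hp => absurd rfl hp)) ?_
            simp
          · refine le_trans (measure_mono (Set.iUnion_subset fun _ => subset_rfl)) ?_
            exact hM k hk l hl hkl
      _ ≤ ENNReal.ofReal c := by
          rw [Finset.sum_const, Finset.sum_const, Finset.card_range, smul_smul,
            nsmul_eq_mul, ← ENNReal.ofReal_natCast, ← ENNReal.ofReal_mul (Nat.cast_nonneg _)]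
          refine ENNReal.ofReal_le_ofReal ?_
          have h1 : ((N * N : ℕ) : ℝ) ≤ ((N : ℝ) + 1) * ((N : ℝ) + 1) := by
            push_cast; nlinarith [Nat.cast_nonneg (α := ℝ) N]
          calc ((N * N : ℕ) : ℝ) * e ≤ (((N : ℝ) + 1) * ((N : ℝ) + 1)) * e :=
                mul_le_mul_of_nonneg_right h1 he0.le
            _ = c := by rw [he]; field_simp
  -- eventualities
  have hev1 : ∀ᶠ n in atTop, ν {x | ε / 2 ≤ dist (h n x) (h 0 x)} ≤ ENNReal.ofReal δ :=
    ENNReal.tendsto_nhds_zero.mp (hh (ε / 2) (half_pos hε)) (ENNReal.ofReal δ)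
      (ENNReal.ofReal_pos.mpr hδ)
  have hev2 : ∀ᶠ n in atTop, P {ω | r ≤ dist (ξ n ω) (ξ 0 ω)} ≤ ENNReal.ofReal c :=
    ENNReal.tendsto_nhds_zero.mp (hξ r hr0) (ENNReal.ofReal c) (ENNReal.ofReal_pos.mpr hc)
  filter_upwards [hev1, hev2, eventually_ge_atTop 1] with n hn1 hn2 hn3
  obtain ⟨n', rfl⟩ : ∃ n', n = n' + 1 := ⟨n - 1, (Nat.succ_pred_eq_of_pos hn3).symm⟩
  -- the five bad events
  set S1 : Set X := {x | ε / 2 ≤ dist (h (n' + 1) x) (h 0 x)} with hS1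
  have hS1meas : MeasurableSet S1 :=
    measurableSet_le measurable_const ((hhmeas (n' + 1)).dist (hhmeas 0))
  have hincl : {ω | ε ≤ dist (h (n' + 1) (ξ (n' + 1) ω)) (h 0 (ξ 0 ω))} ⊆
      (ξ (n' + 1) ⁻¹' S1) ∪ ((ξ (n' + 1) ⁻¹' Fᶜ) ∪ ((ξ 0 ⁻¹' Fᶜ) ∪ ((ξ 0 ⁻¹' B) ∪
        {ω | r ≤ dist (ξ (n' + 1) ω) (ξ 0 ω)}))) := by
    intro ω hω
    by_contra hcon
    simp only [Set.mem_union, not_or, Set.mem_preimage, Set.mem_compl_iff, not_not,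
      Set.mem_setOf_eq, not_le] at hcon
    obtain ⟨hg1, hgF1, hgF0, hgB, hgr⟩ := hcon
    obtain ⟨k, hk'⟩ := Set.mem_iUnion.mp hgF0
    obtain ⟨hkN, hk⟩ := Set.mem_iUnion.mp hk'
    obtain ⟨l, hl'⟩ := Set.mem_iUnion.mp hgF1
    obtain ⟨hlN, hl⟩ := Set.mem_iUnion.mp hl'
    rcases eq_or_ne k l with rfl | hkl
    · -- both in the same piece: distance of images small
      have hb1 : dist (h 0 (ξ (n' + 1) ω)) (y k) < ε / 4 := by
        have := hAsub k (hF'A k hl)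
        simpa [hC] using this
      have hb0 : dist (h 0 (ξ 0 ω)) (y k) < ε / 4 := by
        have := hAsub k (hF'A k hk)
        simpa [hC] using this
      have hd1 : dist (h 0 (ξ (n' + 1) ω)) (h 0 (ξ 0 ω)) < ε / 2 := by
        calc dist (h 0 (ξ (n' + 1) ω)) (h 0 (ξ 0 ω))
            ≤ dist (h 0 (ξ (n' + 1) ω)) (y k) + dist (h 0 (ξ 0 ω)) (y k) :=
              dist_triangle_right _ _ _
          _ < ε / 4 + ε / 4 := add_lt_add hb1 hb0
          _ = ε / 2 := by ring
      have hS1' : dist (h (n' + 1) (ξ (n' + 1) ω)) (h 0 (ξ (n' + 1) ω)) < ε / 2 := by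
        have := hg1; rw [hS1] at this; simpa using this
      have : dist (h (n' + 1) (ξ (n' + 1) ω)) (h 0 (ξ 0 ω)) < ε := by
        calc dist (h (n' + 1) (ξ (n' + 1) ω)) (h 0 (ξ 0 ω))
            ≤ dist (h (n' + 1) (ξ (n' + 1) ω)) (h 0 (ξ (n' + 1) ω)) +
              dist (h 0 (ξ (n' + 1) ω)) (h 0 (ξ 0 ω)) := dist_triangle _ _ _
          _ < ε / 2 + ε / 2 := add_lt_add hS1' hd1
          _ = ε := by ring
      exact absurd hω (not_le.mpr this)
    · -- different pieces: ξ 0 ω is in B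
      apply hgB
      refine Set.mem_iUnion.mpr ⟨k, Set.mem_iUnion.mpr ⟨hkN, Set.mem_iUnion.mpr ⟨l,
        Set.mem_iUnion.mpr ⟨hlN, Set.mem_iUnion.mpr ⟨hkl, hk, ?_⟩⟩⟩⟩⟩
      refine Metric.mem_thickening_iff.mpr ⟨ξ (n' + 1) ω, hl, ?_⟩
      rw [dist_comm]
      exact hgr
  -- measure bounds for the five events
  have hmap : ∀ (s : Set X), MeasurableSet s →
      P (ξ (n' + 1) ⁻¹' s) = Measure.map (ξ (n' + 1)) P s :=
    fun s hs => (Measure.map_apply (hξmeas _) hs).symm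
  have hmap0 : ∀ (s : Set X), MeasurableSet s → P (ξ 0 ⁻¹' s) = μ₁ s :=
    fun s hs => (Measure.map_apply (hξmeas 0) hs).symm
  have b1 : P (ξ (n' + 1) ⁻¹' S1) ≤ ENNReal.ofReal c := by
    rw [hmap _ hS1meas]
    exact hkey n' S1 hS1meas hn1
  have b2 : P (ξ (n' + 1) ⁻¹' Fᶜ) ≤ ENNReal.ofReal c := by
    rw [hmap _ hFmeas.compl]
    exact hkey n' Fᶜ hFmeas.compl hνFc
  have b3 : P (ξ 0 ⁻¹' Fᶜ) ≤ ENNReal.ofReal c := by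
    rw [hmap0 _ hFmeas.compl]; exact hμ₁Fc
  have b4 : P (ξ 0 ⁻¹' B) ≤ ENNReal.ofReal c := by
    rw [hmap0 _ hBmeas]; exact hμ₁B
  calc P {ω | ε ≤ dist (h (n' + 1) (ξ (n' + 1) ω)) (h 0 (ξ 0 ω))}
      ≤ P (ξ (n' + 1) ⁻¹' S1) + (P (ξ (n' + 1) ⁻¹' Fᶜ) + (P (ξ 0 ⁻¹' Fᶜ) +
        (P (ξ 0 ⁻¹' B) + P {ω | r ≤ dist (ξ (n' + 1) ω) (ξ 0 ω)}))) :=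
        (measure_mono hincl).trans ((measure_union_le _ _).trans (add_le_add le_rfl
          ((measure_union_le _ _).trans (add_le_add le_rfl
            ((measure_union_le _ _).trans (add_le_add le_rfl (measure_union_le _ _)))))))
    _ ≤ ENNReal.ofReal c + (ENNReal.ofReal c + (ENNReal.ofReal c +
        (ENNReal.ofReal c + ENNReal.ofReal c))) :=
        add_le_add b1 (add_le_add b2 (add_le_add b3 (add_le_add b4 hn2)))
    _ = ENNReal.ofReal (5 * c) := by
        rw [← ENNReal.ofReal_add hc.le hc.le, ← ENNReal.ofReal_add hc.le (by positivity),
          ← ENNReal.ofReal_add hc.le (by positivity),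
          ← ENNReal.ofReal_add hc.le (by positivity)]
        congr 1
        ring
    _ ≤ θ := hcθ
end

section
/- In dimension d = 1, if a measure μ on ℝ satisfies sup_{x∈ℝ} μ([x−1, x+1]) < ∞, then the measure ν(ds,dx) = μ(dx) ds on [0,∞)×ℝ satisfies lim_{t↓0} sup_{x₀∈ℝ} ∫₀ᵗ ∫_ℝ (2πs)^{−1/2} exp(−(y−x₀)²/(2s)) μ(dy) ds = 0. -/
open MeasureTheory Set
open scoped ENNReal

lemma gauss_piece_bound (μ : Measure ℝ) (C : ℝ≥0∞)
    (hμ : ∀ x : ℝ, μ (Icc (x - 1) (x + 1)) ≤ C) (x₀ : ℝ) (n : ℕ) (a b : ℝ)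
    (hab : Icc a b ⊆ Icc (x₀ + n - 1) (x₀ + n + 1) ∨ Icc a b ⊆ Icc (x₀ - n - 1) (x₀ - n + 1))
    (hdist : ∀ y ∈ Icc a b, (n:ℝ) ≤ (y - x₀)^2) :
    ∫⁻ y in Icc a b, ENNReal.ofReal (Real.exp (-(y - x₀)^2 / 2)) ∂μ ≤
      (ENNReal.ofReal (Real.exp (-(1/2))))^n * C := by
  calc ∫⁻ y in Icc a b, ENNReal.ofReal (Real.exp (-(y - x₀)^2 / 2)) ∂μ
      ≤ ∫⁻ _ in Icc a b, (ENNReal.ofReal (Real.exp (-(1/2))))^n ∂μ := by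
        apply setLIntegral_mono measurable_const
        intro y hy
        rw [← ENNReal.ofReal_pow (Real.exp_nonneg _), ← Real.exp_nat_mul]
        apply ENNReal.ofReal_le_ofReal
        apply Real.exp_le_exp.2
        have := hdist y hy
        rw [mul_comm]
        nlinarith
    _ = (ENNReal.ofReal (Real.exp (-(1/2))))^n * μ (Icc a b) := setLIntegral_const _ _
    _ ≤ (ENNReal.ofReal (Real.exp (-(1/2))))^n * C := by
        gcongr
        rcases hab with h | h
        · exact (measure_mono (h.trans (by rw [show x₀ + n - 1 = (x₀ + n) - 1 by ring]))).trans
            (hμ (x₀ + n))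
        · exact (measure_mono (h.trans (by rw [show x₀ - n - 1 = (x₀ - n) - 1 by ring]))).trans
            (hμ (x₀ - n))

lemma gauss_sum_bound (μ : Measure ℝ) (C : ℝ≥0∞)
    (hμ : ∀ x : ℝ, μ (Icc (x - 1) (x + 1)) ≤ C) (x₀ : ℝ) :
    ∫⁻ y, ENNReal.ofReal (Real.exp (-(y - x₀)^2 / 2)) ∂μ ≤ ENNReal.ofReal 6 * C := by
  set r : ℝ≥0∞ := ENNReal.ofReal (Real.exp (-(1/2))) with hr
  have hexp : Real.exp (-(1/2)) ≤ 2/3 := by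
    rw [Real.exp_neg]
    rw [inv_le_comm₀ (Real.exp_pos _) (by norm_num)]
    calc (2/3:ℝ)⁻¹ = 3/2 := by norm_num
      _ ≤ 1 + 1/2 := by norm_num
      _ ≤ Real.exp (1/2) := Real.add_one_le_exp _ |>.trans_eq' (by ring)
  have hsum : (∑' n : ℕ, r^n) ≤ ENNReal.ofReal 3 := by
    rw [ENNReal.tsum_geometric]
    have h1 : ENNReal.ofReal (1/3) ≤ 1 - r := by
      rw [hr, ← ENNReal.ofReal_one, ← ENNReal.ofReal_sub _ (Real.exp_nonneg _)]
      exact ENNReal.ofReal_le_ofReal (by linarith)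
    calc (1 - r)⁻¹ ≤ (ENNReal.ofReal (1/3))⁻¹ := ENNReal.inv_le_inv' h1
      _ = ENNReal.ofReal 3 := by
          rw [← ENNReal.ofReal_inv_of_pos (by norm_num)]; norm_num
  have hcover : (univ : Set ℝ) ⊆
      (⋃ n : ℕ, Icc (x₀ + n) (x₀ + n + 1)) ∪ (⋃ n : ℕ, Icc (x₀ - n - 1) (x₀ - n)) := by
    intro y _
    rcases le_total x₀ y with h | h
    · left
      refine mem_iUnion.2 ⟨⌊y - x₀⌋.toNat, ?_⟩
      have h0 : (0:ℤ) ≤ ⌊y - x₀⌋ := Int.floor_nonneg.2 (by linarith)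
      have hc : ((⌊y - x₀⌋.toNat : ℕ) : ℝ) = ((⌊y - x₀⌋ : ℤ) : ℝ) := by
        exact_mod_cast congrArg (fun z : ℤ => (z : ℝ)) (Int.toNat_of_nonneg h0)
      have hfl : ((⌊y - x₀⌋ : ℤ) : ℝ) ≤ y - x₀ := Int.floor_le _
      have hfu : y - x₀ < (⌊y - x₀⌋ : ℤ) + 1 := Int.lt_floor_add_one _
      constructor <;> [linarith [hc, hfl]; linarith [hc, hfu]]
    · right
      refine mem_iUnion.2 ⟨⌊x₀ - y⌋.toNat, ?_⟩
      have h0 : (0:ℤ) ≤ ⌊x₀ - y⌋ := Int.floor_nonneg.2 (by linarith)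
      have hc : ((⌊x₀ - y⌋.toNat : ℕ) : ℝ) = ((⌊x₀ - y⌋ : ℤ) : ℝ) := by
        exact_mod_cast congrArg (fun z : ℤ => (z : ℝ)) (Int.toNat_of_nonneg h0)
      have hfl : ((⌊x₀ - y⌋ : ℤ) : ℝ) ≤ x₀ - y := Int.floor_le _
      have hfu : x₀ - y < (⌊x₀ - y⌋ : ℤ) + 1 := Int.lt_floor_add_one _
      constructor <;> [linarith [hc, hfu]; linarith [hc, hfl]]
  have hsq : ∀ n : ℕ, (n:ℝ) ≤ (n:ℝ)^2 := by
    intro n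
    have : n ≤ n^2 := Nat.le_self_pow two_ne_zero n
    exact_mod_cast this
  calc ∫⁻ y, ENNReal.ofReal (Real.exp (-(y - x₀)^2 / 2)) ∂μ
      = ∫⁻ y in univ, ENNReal.ofReal (Real.exp (-(y - x₀)^2 / 2)) ∂μ :=
        (setLIntegral_univ _).symm
    _ ≤ ∫⁻ y in (⋃ n : ℕ, Icc (x₀ + n) (x₀ + n + 1)) ∪ (⋃ n : ℕ, Icc (x₀ - n - 1) (x₀ - n)),
          ENNReal.ofReal (Real.exp (-(y - x₀)^2 / 2)) ∂μ := lintegral_mono_set hcover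
    _ ≤ (∫⁻ y in ⋃ n : ℕ, Icc (x₀ + n) (x₀ + n + 1),
          ENNReal.ofReal (Real.exp (-(y - x₀)^2 / 2)) ∂μ) +
        ∫⁻ y in ⋃ n : ℕ, Icc (x₀ - n - 1) (x₀ - n),
          ENNReal.ofReal (Real.exp (-(y - x₀)^2 / 2)) ∂μ := lintegral_union_le _ _ _
    _ ≤ (∑' n : ℕ, ∫⁻ y in Icc (x₀ + n) (x₀ + n + 1),
          ENNReal.ofReal (Real.exp (-(y - x₀)^2 / 2)) ∂μ) +
        ∑' n : ℕ, ∫⁻ y in Icc (x₀ - n - 1) (x₀ - n),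
          ENNReal.ofReal (Real.exp (-(y - x₀)^2 / 2)) ∂μ := by
        gcongr <;> exact lintegral_iUnion_le _ _
    _ ≤ (∑' n : ℕ, r^n * C) + ∑' n : ℕ, r^n * C := by
        gcongr with n n
        · refine gauss_piece_bound μ C hμ x₀ n _ _ (Or.inl (Icc_subset_Icc (by linarith) le_rfl)) ?_
          intro y hy
          have h1 : (n:ℝ) ≤ y - x₀ := by have := hy.1; linarith
          nlinarith [hsq n, Nat.cast_nonneg (α := ℝ) n]
        · refine gauss_piece_bound μ C hμ x₀ n _ _ (Or.inr (Icc_subset_Icc le_rfl (by linarith))) ?_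
          intro y hy
          have h1 : (n:ℝ) ≤ x₀ - y := by have := hy.2; linarith
          nlinarith [hsq n, Nat.cast_nonneg (α := ℝ) n]
    _ = (∑' n : ℕ, r^n) * C + (∑' n : ℕ, r^n) * C := by rw [ENNReal.tsum_mul_right]
    _ ≤ ENNReal.ofReal 3 * C + ENNReal.ofReal 3 * C := by gcongr
    _ = ENNReal.ofReal 6 * C := by
        rw [← add_mul, ← ENNReal.ofReal_add (by norm_num) (by norm_num)]
        norm_num

lemma sqrt_integral_bound (t : ℝ) (ht : 0 < t) :
    ∫⁻ s in Ioc (0:ℝ) t, ENNReal.ofReal (Real.sqrt s)⁻¹ ≤ ENNReal.ofReal (2 * Real.sqrt t) := by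
  have hcong : ∫⁻ s in Ioc (0:ℝ) t, ENNReal.ofReal (Real.sqrt s)⁻¹ =
      ∫⁻ s in Ioc (0:ℝ) t, ENNReal.ofReal (s ^ (-(1/2) : ℝ)) := by
    apply setLIntegral_congr_fun measurableSet_Ioc
    intro s hs
    beta_reduce
    rw [Real.rpow_neg hs.1.le, Real.sqrt_eq_rpow]
  rw [hcong]
  have hint : IntegrableOn (fun s : ℝ => s ^ (-(1/2) : ℝ)) (Ioc 0 t) := by
    have := intervalIntegral.intervalIntegrable_rpow' (a := 0) (b := t) (r := -(1/2)) (by norm_num)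
    rwa [intervalIntegrable_iff_integrableOn_Ioc_of_le ht.le] at this
  rw [← ofReal_integral_eq_lintegral_ofReal hint]
  · apply ENNReal.ofReal_le_ofReal
    have : ∫ s in Ioc (0:ℝ) t, s ^ (-(1/2) : ℝ) = ∫ s in (0:ℝ)..t, s ^ (-(1/2) : ℝ) := by
      rw [intervalIntegral.integral_of_le ht.le]
    rw [this, integral_rpow (Or.inl (by norm_num))]
    rw [Real.zero_rpow (by norm_num), Real.sqrt_eq_rpow]
    rw [show (-(1/2):ℝ) + 1 = 1/2 by norm_num, sub_zero,
      show t ^ ((1:ℝ)/2) / (1/2) = 2 * t ^ ((1:ℝ)/2) by ring]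
  · filter_upwards [ae_restrict_mem measurableSet_Ioc] with s hs
    exact Real.rpow_nonneg hs.1.le _

/-- In dimension one, a measure `μ` with uniformly bounded mass on unit intervals gives rise
to a measure `μ(dy) ds` of parabolic Kato class. -/
theorem kato_class_dim_one (μ : Measure ℝ)
    (C : ℝ≥0∞) (hC : C < ⊤) (hμ : ∀ x : ℝ, μ (Icc (x - 1) (x + 1)) ≤ C) :
    ∀ δ > (0:ℝ), ∃ t₁ > (0:ℝ), ∀ t, 0 < t → t ≤ t₁ → ∀ x₀ : ℝ,
      (∫⁻ s in Ioc (0:ℝ) t, ∫⁻ y,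
        ENNReal.ofReal ((Real.sqrt (2 * Real.pi * s))⁻¹ *
          Real.exp (-(y - x₀)^2 / (2 * s))) ∂μ) ≤ ENNReal.ofReal δ := by
  intro δ hδ
  set c := C.toReal with hc
  have hc0 : 0 ≤ c := ENNReal.toReal_nonneg
  refine ⟨min 1 ((δ / (12 * (c + 1)))^2), by positivity, ?_⟩
  intro t ht ht₁ x₀
  have ht1 : t ≤ 1 := ht₁.trans (min_le_left _ _)
  have hK : ENNReal.ofReal 6 * C ≠ ⊤ := ENNReal.mul_ne_top ENNReal.ofReal_ne_top hC.ne
  have step1 : ∀ s ∈ Ioc (0:ℝ) t,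
      (∫⁻ y, ENNReal.ofReal ((Real.sqrt (2 * Real.pi * s))⁻¹ *
          Real.exp (-(y - x₀)^2 / (2 * s))) ∂μ) ≤
      ENNReal.ofReal (Real.sqrt s)⁻¹ * (ENNReal.ofReal 6 * C) := by
    intro s hs
    have hs0 : 0 < s := hs.1
    calc ∫⁻ y, ENNReal.ofReal ((Real.sqrt (2 * Real.pi * s))⁻¹ *
            Real.exp (-(y - x₀)^2 / (2 * s))) ∂μ
        = ∫⁻ y, ENNReal.ofReal (Real.sqrt (2 * Real.pi * s))⁻¹ *
            ENNReal.ofReal (Real.exp (-(y - x₀)^2 / (2 * s))) ∂μ := by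
          congr 1; funext y
          rw [← ENNReal.ofReal_mul (by positivity)]
      _ = ENNReal.ofReal (Real.sqrt (2 * Real.pi * s))⁻¹ *
            ∫⁻ y, ENNReal.ofReal (Real.exp (-(y - x₀)^2 / (2 * s))) ∂μ :=
          lintegral_const_mul' _ _ ENNReal.ofReal_ne_top
      _ ≤ ENNReal.ofReal (Real.sqrt s)⁻¹ * (ENNReal.ofReal 6 * C) := by
          apply mul_le_mul'
          · apply ENNReal.ofReal_le_ofReal
            apply inv_anti₀ (Real.sqrt_pos.2 hs0)
            apply Real.sqrt_le_sqrt
            nlinarith [Real.pi_gt_three, hs0.le]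
          · calc ∫⁻ y, ENNReal.ofReal (Real.exp (-(y - x₀)^2 / (2 * s))) ∂μ
                ≤ ∫⁻ y, ENNReal.ofReal (Real.exp (-(y - x₀)^2 / 2)) ∂μ := by
                  apply lintegral_mono
                  intro y
                  apply ENNReal.ofReal_le_ofReal
                  apply Real.exp_le_exp.2
                  rw [div_le_div_iff₀ (by positivity) (by norm_num)]
                  have hst : s ≤ 1 := hs.2.trans ht1
                  nlinarith [sq_nonneg (y - x₀), hs0.le]
              _ ≤ ENNReal.ofReal 6 * C := gauss_sum_bound μ C hμ x₀
  calc (∫⁻ s in Ioc (0:ℝ) t, ∫⁻ y,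
          ENNReal.ofReal ((Real.sqrt (2 * Real.pi * s))⁻¹ *
            Real.exp (-(y - x₀)^2 / (2 * s))) ∂μ)
      ≤ ∫⁻ s in Ioc (0:ℝ) t, ENNReal.ofReal (Real.sqrt s)⁻¹ * (ENNReal.ofReal 6 * C) := by
        apply setLIntegral_mono
          ((measurable_id.sqrt.inv).ennreal_ofReal.mul_const _) step1
    _ = (∫⁻ s in Ioc (0:ℝ) t, ENNReal.ofReal (Real.sqrt s)⁻¹) * (ENNReal.ofReal 6 * C) :=
        lintegral_mul_const' _ _ hK
    _ ≤ ENNReal.ofReal (2 * Real.sqrt t) * (ENNReal.ofReal 6 * C) := by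
        gcongr; exact sqrt_integral_bound t ht
    _ = ENNReal.ofReal (2 * Real.sqrt t) * (ENNReal.ofReal 6 * ENNReal.ofReal c) := by
        rw [hc, ENNReal.ofReal_toReal hC.ne]
    _ = ENNReal.ofReal (2 * Real.sqrt t * (6 * c)) := by
        rw [← ENNReal.ofReal_mul (by norm_num), ← ENNReal.ofReal_mul (by positivity)]
    _ ≤ ENNReal.ofReal δ := by
        apply ENNReal.ofReal_le_ofReal
        have hst : Real.sqrt t ≤ δ / (12 * (c + 1)) := by
          have h1 : t ≤ (δ / (12 * (c + 1)))^2 := ht₁.trans (min_le_right _ _)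
          have := Real.sqrt_le_sqrt h1
          rwa [Real.sqrt_sq (by positivity)] at this
        have h12 : (0:ℝ) < 12 * (c + 1) := by positivity
        have h2 : 2 * Real.sqrt t * (6 * c) ≤ 12 * (δ / (12 * (c + 1))) * c := by
          nlinarith [Real.sqrt_nonneg t]
        calc 2 * Real.sqrt t * (6 * c) ≤ 12 * (δ / (12 * (c + 1))) * c := h2
          _ = δ * (c / (c + 1)) := by field_simp
          _ ≤ δ * 1 := by
              apply mul_le_mul_of_nonneg_left _ hδ.le
              rw [div_le_one (by positivity)]; linarith
          _ = δ := mul_one δ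
end
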